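/- Let G be a graph whose complement contains an induced matching with ℓ ≥ 1 edges. Then bp(G) ≤ n - ℓ - 1, where n is the number of vertices of G. -/

import Mathlib

open Finset

/-- The finset of edges (as elements of `Sym2 V`) of the complete bipartite graph with
parts `A` and `B`. -/
def bicliqueEdges {V : Type*} [DecidableEq V] (A B : Finset V) : Finset (Sym2 V) :=
  (A ×ˢ B).image fun p => s(p.1, p.2)

/-- `P` is a partition of the edge set of `G` into pairwise edge-disjoint nonempty complete
bipartite subgraphs. -/
def IsBicliquePartition {V : Type*} [Fintype V] [DecidableEq V] (G : SimpleGraph V)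
    [DecidableRel G.Adj] (P : Finset (Finset V × Finset V)) : Prop :=
  (∀ c ∈ P, c.1.Nonempty ∧ c.2.Nonempty ∧ Disjoint c.1 c.2 ∧
      ∀ a ∈ c.1, ∀ b ∈ c.2, G.Adj a b) ∧
  ((P : Set (Finset V × Finset V)).Pairwise fun c d =>
      Disjoint (bicliqueEdges c.1 c.2) (bicliqueEdges d.1 d.2)) ∧
  P.sup (fun c => bicliqueEdges c.1 c.2) = G.edgeFinset

/-- The biclique partition number. -/
noncomputable def bp {V : Type*} [Fintype V] [DecidableEq V] (G : SimpleGraph V)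
    [DecidableRel G.Adj] : ℕ :=
  sInf {m | ∃ P : Finset (Finset V × Finset V), IsBicliquePartition G P ∧ P.card = m}

/-- The complement of `G` contains an induced matching with `l` edges: there are `2l`
vertices `S` and `l` pairwise vertex-disjoint edges `M` of the complement, all inside `S`,
such that the non-edges of `G` inside `S` are exactly the edges of `M`. -/
def ComplementHasInducedMatching {V : Type*} [DecidableEq V] (G : SimpleGraph V)
    (l : ℕ) : Prop :=
  ∃ (S : Finset V) (M : Finset (Sym2 V)),
    S.card = 2 * l ∧ M.card = l ∧
    (∀ e ∈ M, ∀ v ∈ e, v ∈ S) ∧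
    (∀ e ∈ M, ∀ e' ∈ M, e ≠ e' → ∀ v ∈ e, v ∉ e') ∧
    (∀ u ∈ S, ∀ v ∈ S, (u ≠ v ∧ ¬ G.Adj u v) ↔ s(u, v) ∈ M)

lemma mem_bicliqueEdges {V : Type*} [DecidableEq V] {A B : Finset V} {e : Sym2 V} :
    e ∈ bicliqueEdges A B ↔ ∃ a ∈ A, ∃ b ∈ B, e = s(a, b) := by
  simp only [bicliqueEdges, Finset.mem_image, Finset.mem_product, Prod.exists]
  constructor
  · rintro ⟨a, b, ⟨ha, hb⟩, rfl⟩; exact ⟨a, ha, b, hb, rfl⟩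
  · rintro ⟨a, ha, b, hb, rfl⟩; exact ⟨a, b, ⟨ha, hb⟩, rfl⟩

theorem bp_le_of_inducedMatching_in_complement {V : Type*} [Fintype V] [DecidableEq V]
    (G : SimpleGraph V) [DecidableRel G.Adj] (l : ℕ) (hl : 1 ≤ l)
    (hM : ComplementHasInducedMatching G l) :
    bp G ≤ Fintype.card V - l - 1 := by
  classical
  obtain ⟨S, M, hScard, hMcard, hMS, hMdisj, hiff⟩ := hM
  -- every matching edge is nondegenerate
  have hMne : ∀ e ∈ M, ∃ a b : V, a ≠ b ∧ e = s(a, b) ∧ a ∈ S ∧ b ∈ S := by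
    intro e he
    induction e using Sym2.ind with
    | _ a b =>
      have ha : a ∈ S := hMS _ he a (by simp)
      have hb : b ∈ S := hMS _ he b (by simp)
      have hab : a ≠ b := by
        rintro rfl
        exact ((hiff a ha a ha).2 he).1 rfl
      exact ⟨a, b, hab, rfl, ha, hb⟩
  -- vertex sets of matching edges
  set vertsF : Sym2 V → Finset V := fun e => Finset.univ.filter (· ∈ e) with hvertsF
  have hverts_mem : ∀ e (v : V), v ∈ vertsF e ↔ v ∈ e := by
    intro e v; simp [hvertsF]
  have hverts_card : ∀ e ∈ M, (vertsF e).card = 2 := by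
    intro e he
    obtain ⟨a, b, hab, rfl, -, -⟩ := hMne e he
    have : vertsF s(a, b) = {a, b} := by
      ext x; simp [hvertsF, Sym2.mem_iff]
    rw [this, Finset.card_insert_of_notMem (by simpa using hab), Finset.card_singleton]
  have hverts_disj : ∀ e ∈ M, ∀ e' ∈ M, e ≠ e' → Disjoint (vertsF e) (vertsF e') := by
    intro e he e' he' hne
    rw [Finset.disjoint_left]
    intro v hv hv'
    exact hMdisj e he e' he' hne v ((hverts_mem e v).1 hv) ((hverts_mem e' v).1 hv')
  -- S is exactly the union of the matching vertices
  have hcover : ∀ u ∈ S, ∃ e ∈ M, u ∈ e := by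
    have hsub : M.biUnion vertsF ⊆ S := by
      intro v hv
      obtain ⟨e, he, hve⟩ := Finset.mem_biUnion.1 hv
      exact hMS e he v ((hverts_mem e v).1 hve)
    have hcard : (M.biUnion vertsF).card = 2 * l := by
      rw [Finset.card_biUnion hverts_disj]
      rw [Finset.sum_congr rfl hverts_card]
      simp [hMcard, mul_comm]
    have : M.biUnion vertsF = S :=
      Finset.eq_of_subset_of_card_le hsub (by rw [hScard, hcard])
    intro u hu
    rw [← this] at hu
    obtain ⟨e, he, hue⟩ := Finset.mem_biUnion.1 hu
    exact ⟨e, he, (hverts_mem e u).1 hue⟩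
  -- enumerate matching edges
  set edg : Fin l → Sym2 V := fun i => (M.equivFin.symm (Fin.cast hMcard.symm i) : Sym2 V)
    with hedg
  have hedg_mem : ∀ i, edg i ∈ M := fun i => (M.equivFin.symm _).2
  have hedg_inj : Function.Injective edg := by
    intro i j h
    have := Subtype.ext h
    have := M.equivFin.symm.injective this
    simpa [Fin.ext_iff] using congrArg Fin.val this
  have hedg_surj : ∀ e ∈ M, ∃ i, edg i = e := by
    intro e he
    refine ⟨Fin.cast hMcard (M.equivFin ⟨e, he⟩), ?_⟩
    simp [hedg]
  -- the pairs
  set pairF : Fin l → Finset V := fun i => vertsF (edg i) with hpairF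
  have hpair_sub : ∀ i, pairF i ⊆ S := by
    intro i v hv
    exact hMS _ (hedg_mem i) v ((hverts_mem _ v).1 hv)
  have hpair_card : ∀ i, (pairF i).card = 2 := fun i => hverts_card _ (hedg_mem i)
  have hpair_nonempty : ∀ i, (pairF i).Nonempty := by
    intro i
    rw [← Finset.card_pos, hpair_card]; norm_num
  have hpair_disj : ∀ i j, i ≠ j → Disjoint (pairF i) (pairF j) := by
    intro i j hij
    exact hverts_disj _ (hedg_mem i) _ (hedg_mem j) (fun h => hij (hedg_inj h))
  have puniq : ∀ {i j : Fin l} {u : V}, u ∈ pairF i → u ∈ pairF j → i = j := by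
    intro i j u hi hj
    by_contra h
    exact (Finset.disjoint_left.1 (hpair_disj i j h)) hi hj
  have hpair_exists : ∀ u ∈ S, ∃ i, u ∈ pairF i := by
    intro u hu
    obtain ⟨e, he, hue⟩ := hcover u hu
    obtain ⟨i, rfl⟩ := hedg_surj e he
    exact ⟨i, (hverts_mem _ u).2 hue⟩
  have hpair_eq : ∀ (i : Fin l) (u v : V), u ∈ pairF i → v ∈ pairF i → u ≠ v →
      s(u, v) = edg i := by
    intro i u v hu hv huv
    obtain ⟨a, b, hab, heq, -, -⟩ := hMne _ (hedg_mem i)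
    rw [heq]
    have hu' : u = a ∨ u = b := by
      have := (hverts_mem _ u).1 hu; rw [heq] at this; simpa [Sym2.mem_iff] using this
    have hv' : v = a ∨ v = b := by
      have := (hverts_mem _ v).1 hv; rw [heq] at this; simpa [Sym2.mem_iff] using this
    rcases hu' with rfl | rfl <;> rcases hv' with rfl | rfl
    · exact absurd rfl huv
    · rfl
    · exact Sym2.eq_swap
    · exact absurd rfl huv
  -- adjacency between distinct pairs
  have hadj_pairs : ∀ i j, i ≠ j → ∀ u ∈ pairF i, ∀ v ∈ pairF j, G.Adj u v := by
    intro i j hij u hu v hv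
    have huS := hpair_sub i hu
    have hvS := hpair_sub j hv
    have huv : u ≠ v := by
      rintro rfl
      exact hij (puniq hu hv)
    by_contra hadj
    have hmem : s(u, v) ∈ M := (hiff u huS v hvS).1 ⟨huv, hadj⟩
    obtain ⟨k, hk⟩ := hedg_surj _ hmem
    have hu' : u ∈ pairF k := (hverts_mem _ u).2 (by rw [hk]; simp [Sym2.mem_iff])
    have hv' : v ∈ pairF k := (hverts_mem _ v).2 (by rw [hk]; simp [Sym2.mem_iff])
    exact hij ((puniq hu hu').trans (puniq hv' hv))
  -- the tails
  set tail : Fin l → Finset V := fun i => (Finset.Ioi i).biUnion pairF with htail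
  have htail_mem : ∀ (i : Fin l) (v : V), v ∈ tail i ↔ ∃ j, i < j ∧ v ∈ pairF j := by
    intro i v; simp [htail]
  -- the rank function
  set rk : V → ℕ := fun v => (Fintype.equivFin V v : ℕ) with hrk
  have hrk_inj : ∀ {u v : V}, rk u = rk v → u = v := by
    intro u v h
    exact (Fintype.equivFin V).injective (Fin.ext h)
  -- the stars
  set starSide : V → Finset V := fun v =>
    Finset.univ.filter (fun u => G.Adj v u ∧ (u ∈ S ∨ rk v < rk u)) with hstar
  have hstar_mem : ∀ v u, u ∈ starSide v ↔ G.Adj v u ∧ (u ∈ S ∨ rk v < rk u) := by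
    intro v u; simp [hstar]
  -- the partition
  set P : Finset (Finset V × Finset V) :=
    ((Sᶜ).filter fun v => (starSide v).Nonempty).image (fun v => ({v}, starSide v))
      ∪ ((Finset.univ : Finset (Fin l)).filter fun i => (tail i).Nonempty).image
        (fun i => (pairF i, tail i)) with hP
  have hPmem : ∀ c ∈ P,
      (∃ v, v ∉ S ∧ (starSide v).Nonempty ∧ c = ({v}, starSide v)) ∨
      (∃ i, (tail i).Nonempty ∧ c = (pairF i, tail i)) := by
    intro c hc
    rw [hP, Finset.mem_union] at hc
    rcases hc with hc | hc
    · obtain ⟨v, hv, rfl⟩ := Finset.mem_image.1 hc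
      rw [Finset.mem_filter, Finset.mem_compl] at hv
      exact Or.inl ⟨v, hv.1, hv.2, rfl⟩
    · obtain ⟨i, hi, rfl⟩ := Finset.mem_image.1 hc
      rw [Finset.mem_filter] at hi
      exact Or.inr ⟨i, hi.2, rfl⟩

  -- disjointness of a pair from its tail
  have hpt_disj : ∀ i, Disjoint (pairF i) (tail i) := by
    intro i
    rw [Finset.disjoint_left]
    intro v hv hv'
    obtain ⟨j, hij, hvj⟩ := (htail_mem i v).1 hv'
    exact (Finset.disjoint_left.1 (hpair_disj i j (ne_of_lt hij))) hv hvj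
  -- condition 1
  have hcond1 : ∀ c ∈ P, c.1.Nonempty ∧ c.2.Nonempty ∧ Disjoint c.1 c.2 ∧
      ∀ a ∈ c.1, ∀ b ∈ c.2, G.Adj a b := by
    intro c hc
    rcases hPmem c hc with ⟨v, hvS, hne, rfl⟩ | ⟨i, hne, rfl⟩
    · refine ⟨Finset.singleton_nonempty v, hne, ?_, ?_⟩
      · rw [Finset.disjoint_singleton_left]
        intro hv
        exact (G.loopless.irrefl v) ((hstar_mem v v).1 hv).1
      · intro a ha b hb
        rw [Finset.mem_singleton] at ha
        subst ha
        exact ((hstar_mem a b).1 hb).1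
    · refine ⟨hpair_nonempty i, hne, hpt_disj i, ?_⟩
      intro a ha b hb
      obtain ⟨j, hij, hbj⟩ := (htail_mem i b).1 hb
      exact hadj_pairs i j (ne_of_lt hij) a ha b hbj
  -- edges of a star contain the center
  -- condition 2: pairwise edge-disjointness
  have hcond2 : (P : Set (Finset V × Finset V)).Pairwise fun c d =>
      Disjoint (bicliqueEdges c.1 c.2) (bicliqueEdges d.1 d.2) := by
    intro c hc d hd hcd
    rw [Finset.disjoint_left]
    intro e hec hed
    rcases hPmem c hc with ⟨v, hvS, -, rfl⟩ | ⟨i, -, rfl⟩ <;>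
      rcases hPmem d hd with ⟨w, hwS, -, rfl⟩ | ⟨j, -, rfl⟩
    · -- star vs star
      obtain ⟨a, ha, b, hb, rfl⟩ := mem_bicliqueEdges.1 hec
      obtain ⟨a', ha', b', hb', heq⟩ := mem_bicliqueEdges.1 hed
      rw [Finset.mem_singleton] at ha ha'
      subst ha; subst ha'
      have hvw : a ≠ a' := by rintro rfl; exact hcd rfl
      rcases Sym2.eq_iff.1 heq with ⟨h1, h2⟩ | ⟨h1, h2⟩
      · exact hvw h1
      · subst h1; subst h2
        have h1 := ((hstar_mem a b).1 hb).2
        have h2 := ((hstar_mem b a).1 hb').2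
        rcases h1 with h1 | h1
        · exact hwS h1
        · rcases h2 with h2 | h2
          · exact hvS h2
          · omega
    · -- star vs pair-biclique
      obtain ⟨a, ha, b, hb, rfl⟩ := mem_bicliqueEdges.1 hec
      obtain ⟨a', ha', b', hb', heq⟩ := mem_bicliqueEdges.1 hed
      rw [Finset.mem_singleton] at ha
      subst ha
      have ha'S : a' ∈ S := hpair_sub j ha'
      have hb'S : b' ∈ S := by
        obtain ⟨k, -, hk⟩ := (htail_mem j b').1 hb'
        exact hpair_sub k hk
      rcases Sym2.eq_iff.1 heq with ⟨h1, -⟩ | ⟨h1, -⟩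
      · exact hvS (h1 ▸ ha'S)
      · exact hvS (h1 ▸ hb'S)
    · -- pair-biclique vs star
      obtain ⟨a, ha, b, hb, rfl⟩ := mem_bicliqueEdges.1 hec
      obtain ⟨a', ha', b', hb', heq⟩ := mem_bicliqueEdges.1 hed
      rw [Finset.mem_singleton] at ha'
      subst ha'
      have haS : a ∈ S := hpair_sub i ha
      have hbS : b ∈ S := by
        obtain ⟨k, -, hk⟩ := (htail_mem i b).1 hb
        exact hpair_sub k hk
      rcases Sym2.eq_iff.1 heq with ⟨h1, -⟩ | ⟨-, h2⟩
      · exact hwS (h1 ▸ haS)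
      · exact hwS (h2 ▸ hbS)
    · -- pair vs pair
      obtain ⟨a, ha, b, hb, rfl⟩ := mem_bicliqueEdges.1 hec
      obtain ⟨a', ha', b', hb', heq⟩ := mem_bicliqueEdges.1 hed
      obtain ⟨k, hik, hbk⟩ := (htail_mem i b).1 hb
      obtain ⟨m, hjm, hbm⟩ := (htail_mem j b').1 hb'
      have hij : i ≠ j := by
        rintro rfl; exact hcd rfl
      rcases Sym2.eq_iff.1 heq with ⟨h1, h2⟩ | ⟨h1, h2⟩
      · exact hij (puniq ha (h1 ▸ ha'))
      · subst h1; subst h2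
        have him : i = m := puniq ha hbm
        have hkj : k = j := puniq hbk ha'
        subst him; subst hkj
        exact absurd (hik.trans hjm) (lt_irrefl i)
  -- helper for covering edges with a vertex outside S
  have hcoverT : ∀ u v : V, u ∉ S → G.Adj u v → (v ∈ S ∨ rk u < rk v) →
      s(u, v) ∈ P.sup (fun c => bicliqueEdges c.1 c.2) := by
    intro u v huS hadj hv
    have hvstar : v ∈ starSide u := (hstar_mem u v).2 ⟨hadj, hv⟩
    have hcP : (({u}, starSide u) : Finset V × Finset V) ∈ P := by
      rw [hP, Finset.mem_union]
      left
      refine Finset.mem_image.2 ⟨u, ?_, rfl⟩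
      rw [Finset.mem_filter, Finset.mem_compl]
      exact ⟨huS, ⟨v, hvstar⟩⟩
    refine Finset.mem_sup.2 ⟨_, hcP, ?_⟩
    exact mem_bicliqueEdges.2 ⟨u, Finset.mem_singleton_self u, v, hvstar, rfl⟩
  -- helper for covering edges inside S
  have hcoverS : ∀ u v : V, ∀ i j : Fin l, i < j → u ∈ pairF i → v ∈ pairF j →
      s(u, v) ∈ P.sup (fun c => bicliqueEdges c.1 c.2) := by
    intro u v i j hij hu hv
    have hvt : v ∈ tail i := (htail_mem i v).2 ⟨j, hij, hv⟩
    have hcP : ((pairF i, tail i) : Finset V × Finset V) ∈ P := by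
      rw [hP, Finset.mem_union]
      right
      refine Finset.mem_image.2 ⟨i, ?_, rfl⟩
      rw [Finset.mem_filter]
      exact ⟨Finset.mem_univ i, ⟨v, hvt⟩⟩
    refine Finset.mem_sup.2 ⟨_, hcP, ?_⟩
    exact mem_bicliqueEdges.2 ⟨u, hu, v, hvt, rfl⟩
  -- condition 3
  have hcond3 : P.sup (fun c => bicliqueEdges c.1 c.2) = G.edgeFinset := by
    apply Finset.Subset.antisymm
    · intro e he
      obtain ⟨c, hc, hec⟩ := Finset.mem_sup.1 he
      obtain ⟨a, ha, b, hb, rfl⟩ := mem_bicliqueEdges.1 hec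
      rw [SimpleGraph.mem_edgeFinset]
      exact (SimpleGraph.mem_edgeSet G).2 ((hcond1 c hc).2.2.2 a ha b hb)
    · intro e he
      rw [SimpleGraph.mem_edgeFinset] at he
      induction e using Sym2.ind with
      | _ u v =>
        have hadj : G.Adj u v := (SimpleGraph.mem_edgeSet G).1 he
        have huv : u ≠ v := G.ne_of_adj hadj
        by_cases huS : u ∈ S <;> by_cases hvS : v ∈ S
        · -- both in S
          obtain ⟨i, hi⟩ := hpair_exists u huS
          obtain ⟨j, hj⟩ := hpair_exists v hvS
          have hij : i ≠ j := by
            rintro rfl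
            have : s(u, v) ∈ M := by
              rw [hpair_eq i u v hi hj huv]
              exact hedg_mem i
            exact ((hiff u huS v hvS).2 this).2 hadj
          rcases lt_or_gt_of_ne hij with h | h
          · exact hcoverS u v i j h hi hj
          · rw [Sym2.eq_swap]
            exact hcoverS v u j i h hj hi
        · rw [Sym2.eq_swap]
          exact hcoverT v u hvS hadj.symm (Or.inl huS)
        · exact hcoverT u v huS hadj (Or.inl hvS)
        · have hne : rk u ≠ rk v := fun h => huv (hrk_inj h)
          rcases lt_or_gt_of_ne hne with h | h
          · exact hcoverT u v huS hadj (Or.inr h)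
          · rw [Sym2.eq_swap]
            exact hcoverT v u hvS hadj.symm (Or.inr h)
  -- cardinality bound
  have hn2l : 2 * l ≤ Fintype.card V := by
    rw [← hScard]; exact Finset.card_le_univ S
  have hcard : P.card ≤ Fintype.card V - l - 1 := by
    have h1 : (((Sᶜ).filter fun v => (starSide v).Nonempty).image
        (fun v => (({v} : Finset V), starSide v))).card ≤ Fintype.card V - 2 * l := by
      calc _ ≤ ((Sᶜ).filter fun v => (starSide v).Nonempty).card := Finset.card_image_le
        _ ≤ (Sᶜ).card := Finset.card_filter_le _ _
        _ = Fintype.card V - 2 * l := by rw [Finset.card_compl, hScard]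
    have h2 : ((((Finset.univ : Finset (Fin l)).filter fun i => (tail i).Nonempty)).image
        (fun i => (pairF i, tail i))).card ≤ l - 1 := by
      have hlast : (⟨l - 1, by omega⟩ : Fin l) ∉
          ((Finset.univ : Finset (Fin l)).filter fun i => (tail i).Nonempty) := by
        rw [Finset.mem_filter]
        rintro ⟨-, x, hx⟩
        obtain ⟨j, hj, -⟩ := (htail_mem _ x).1 hx
        have := j.2
        have hjv : (⟨l - 1, by omega⟩ : Fin l) < j := hj
        rw [Fin.lt_def] at hjv
        simp only at hjv
        omega
      calc _ ≤ (((Finset.univ : Finset (Fin l)).filter fun i => (tail i).Nonempty)).card :=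
            Finset.card_image_le
        _ ≤ ((Finset.univ : Finset (Fin l)).erase ⟨l - 1, by omega⟩).card :=
            Finset.card_le_card (fun x hx => Finset.mem_erase.2
              ⟨fun h => hlast (h ▸ hx), Finset.mem_univ x⟩)
        _ = l - 1 := by
            rw [Finset.card_erase_of_mem (Finset.mem_univ _), Finset.card_univ, Fintype.card_fin]
    calc P.card ≤ _ + _ := Finset.card_union_le _ _
      _ ≤ (Fintype.card V - 2 * l) + (l - 1) := Nat.add_le_add h1 h2
      _ ≤ Fintype.card V - l - 1 := by omega
  have : bp G ≤ P.card := Nat.sInf_le ⟨P, ⟨hcond1, hcond2, hcond3⟩, rfl⟩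
  exact this.trans hcard
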